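/- arXiv:2211.10932 — 7 statements merged into one kernel-verified Lean document; each statement's English description precedes it below -/
import Mathlib

section
/- For an order-enriched category A, the MacNeille operator cl on P(A), acting as the identity on objects and defined by cl(S) = {f ∈ A(a,b) | for all morphisms g: a' → a, h: b → b', k: a → b of A, if h ∘ s ∘ g ≤ k for all s ∈ S then h ∘ f ∘ g ≤ k}, is a compatible quantaloidal nucleus on the power-set quantaloid P(A). -/
universe u v

/-- A (small) quantaloid: a category enriched in complete lattices, with composition
preserving arbitrary suprema in both variables. -/
structure Quantaloid where
  Obj : Type u
  Hom : Obj → Obj → Type v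
  [lat : ∀ a b, CompleteLattice (Hom a b)]
  id : ∀ a, Hom a a
  comp : ∀ {a b c}, Hom b c → Hom a b → Hom a c
  id_comp : ∀ {a b} (f : Hom a b), comp (id b) f = f
  comp_id : ∀ {a b} (f : Hom a b), comp f (id a) = f
  assoc : ∀ {a b c d} (h : Hom c d) (g : Hom b c) (f : Hom a b),
    comp (comp h g) f = comp h (comp g f)
  comp_sSup : ∀ {a b c} (g : Hom b c) (S : Set (Hom a b)),
    comp g (sSup S) = sSup ((fun f => comp g f) '' S)
  sSup_comp : ∀ {a b c} (S : Set (Hom b c)) (f : Hom a b),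
    comp (sSup S) f = sSup ((fun g => comp g f) '' S)

attribute [instance] Quantaloid.lat

/-- A quantaloidal nucleus on a quantaloid: a family of monotone, inflationary,
idempotent maps on the hom-lattices, lax with respect to composition. -/
structure QNucleus (Q : Quantaloid) where
  map : ∀ {a b : Q.Obj}, Q.Hom a b → Q.Hom a b
  mono : ∀ {a b : Q.Obj} {f g : Q.Hom a b}, f ≤ g → map f ≤ map g
  le_map : ∀ {a b : Q.Obj} (f : Q.Hom a b), f ≤ map f
  idem : ∀ {a b : Q.Obj} (f : Q.Hom a b), map (map f) = map f
  comp_le : ∀ {a b c : Q.Obj} (g : Q.Hom b c) (f : Q.Hom a b),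
    Q.comp (map g) (map f) ≤ map (Q.comp g f)

/-- Hom-sets of the quotient `Q_j`: fixed points of the nucleus, with the induced order. -/
abbrev QNucleus.FHom {Q : Quantaloid} (j : QNucleus Q) (a b : Q.Obj) : Type v :=
  {f : Q.Hom a b // j.map f = f}

/-- Composition in the quotient `Q_j`: `g ∘_j f = j (g ∘ f)`. -/
def QNucleus.qcomp {Q : Quantaloid} (j : QNucleus Q) {a b c : Q.Obj}
    (g : j.FHom b c) (f : j.FHom a b) : j.FHom a c :=
  ⟨j.map (Q.comp g.1 f.1), j.idem _⟩

/-- The identity of the quotient `Q_j` at `a` is `j(1_a)`. -/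
def QNucleus.qid {Q : Quantaloid} (j : QNucleus Q) (a : Q.Obj) : j.FHom a a :=
  ⟨j.map (Q.id a), j.idem _⟩
/-- An order-enriched category: a locally small category whose hom-sets are posets
and whose composition is monotone in both variables. -/
structure OCat where
  Obj : Type u
  Hom : Obj → Obj → Type v
  [po : ∀ a b, PartialOrder (Hom a b)]
  id : ∀ a, Hom a a
  comp : ∀ {a b c}, Hom b c → Hom a b → Hom a c
  id_comp : ∀ {a b} (f : Hom a b), comp (id b) f = f
  comp_id : ∀ {a b} (f : Hom a b), comp f (id a) = f
  assoc : ∀ {a b c d} (h : Hom c d) (g : Hom b c) (f : Hom a b),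
    comp (comp h g) f = comp h (comp g f)
  comp_mono : ∀ {a b c} {g₁ g₂ : Hom b c} {f₁ f₂ : Hom a b},
    g₁ ≤ g₂ → f₁ ≤ f₂ → comp g₁ f₁ ≤ comp g₂ f₂

attribute [instance] OCat.po

/-- The power-set quantaloid `P(A)` of an order-enriched category `A`: same objects,
hom-sets the power sets of the hom-sets of `A` ordered by inclusion, composition
`T ∘ S = {g ∘ f | g ∈ T, f ∈ S}`, identities `{1_a}`. -/
def PQ (A : OCat) : Quantaloid where
  Obj := A.Obj
  Hom a b := Set (A.Hom a b)
  lat _ _ := inferInstance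
  id a := {A.id a}
  comp T S := Set.image2 A.comp T S
  id_comp S := by ext x; simp [A.id_comp]
  comp_id S := by ext x; simp [A.comp_id]
  assoc U T S := by
    ext x
    simp only [Set.mem_image2]
    constructor
    · rintro ⟨y, ⟨u, hu, t, ht, rfl⟩, s, hs, rfl⟩
      exact ⟨u, hu, A.comp t s, ⟨t, ht, s, hs, rfl⟩, (A.assoc u t s).symm⟩
    · rintro ⟨u, hu, y, ⟨t, ht, s, hs, rfl⟩, rfl⟩
      exact ⟨A.comp u t, ⟨u, hu, t, ht, rfl⟩, s, hs, A.assoc u t s⟩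
  comp_sSup T 𝒮 := by
    ext x
    simp only [Set.sSup_eq_sUnion, Set.mem_image2, Set.mem_sUnion, Set.mem_image]
    constructor
    · rintro ⟨g, hg, f, ⟨S, hS, hf⟩, rfl⟩
      exact ⟨_, ⟨S, hS, rfl⟩, g, hg, f, hf, rfl⟩
    · rintro ⟨_, ⟨S, hS, rfl⟩, g, hg, f, hf, rfl⟩
      exact ⟨g, hg, f, ⟨S, hS, hf⟩, rfl⟩
  sSup_comp 𝒯 S := by
    ext x
    simp only [Set.sSup_eq_sUnion, Set.mem_image2, Set.mem_sUnion, Set.mem_image]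
    constructor
    · rintro ⟨g, ⟨T, hT, hg⟩, f, hf, rfl⟩
      exact ⟨_, ⟨T, hT, rfl⟩, g, hg, f, hf, rfl⟩
    · rintro ⟨_, ⟨T, hT, rfl⟩, g, hg, f, hf, rfl⟩
      exact ⟨g, ⟨T, hT, hg⟩, f, hf, rfl⟩

/-- A quantaloidal nucleus on the power-set quantaloid `P(A)` is compatible if
`j({f}) = ↓f` for every morphism `f` of `A`. -/
def QNucleus.Compatible {A : OCat} (j : QNucleus (PQ A)) : Prop :=
  ∀ {a b : A.Obj} (f : A.Hom a b), j.map ({f} : Set (A.Hom a b)) = Set.Iic f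

/-- The MacNeille operator on `P(A)(a,b)`:
`cl(S) = {f | ∀ g : a' → a, h : b → b', k : a' → b', (∀ s ∈ S, h∘s∘g ≤ k) → h∘f∘g ≤ k}`. -/
def clOp (A : OCat) {a b : A.Obj} (S : Set (A.Hom a b)) : Set (A.Hom a b) :=
  {f | ∀ (a' b' : A.Obj) (g : A.Hom a' a) (h : A.Hom b b') (k : A.Hom a' b'),
        (∀ s ∈ S, A.comp h (A.comp s g) ≤ k) → A.comp h (A.comp f g) ≤ k}

/-- For an order-enriched category `A`, the MacNeille operator `cl` (identity on
objects) is a compatible quantaloidal nucleus on the power-set quantaloid `P(A)`. -/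
theorem macneille_is_compatible_nucleus (A : OCat) :
    ∃ j : QNucleus (PQ A),
      (∀ {a b : A.Obj} (S : Set (A.Hom a b)), j.map S = clOp A S) ∧ j.Compatible := by
  refine ⟨{
    map := fun {a b} S => clOp A S
    mono := fun {a b} {S T} hST f hf a' b' g h k hk =>
      hf a' b' g h k (fun s hs => hk s (hST hs))
    le_map := fun {a b} S f hf a' b' g h k hk => hk f hf
    idem := fun {a b} S => le_antisymm
      (fun f hf a' b' g h k hk => hf a' b' g h k
        (fun s hs => hs a' b' g h k hk))
      (fun f hf a' b' g h k hk => hk f hf)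
    comp_le := by
      rintro a b c T S x ⟨t, ht, s, hs, rfl⟩
      intro a' c' g h k hk
      have hstep : ∀ u, u ∈ (id T : Set (A.Hom b c)) →
          A.comp h (A.comp u (A.comp s g)) ≤ k := by
        intro u hu
        have h1 := hs a' c' g (A.comp h u) k (fun v hv => by
          have h2 := hk (A.comp u v) ⟨u, hu, v, hv, rfl⟩
          rw [A.assoc u v g, ← A.assoc h u (A.comp v g)] at h2
          exact h2)
        rw [A.assoc h u (A.comp s g)] at h1
        exact h1
      have h3 := ht a' c' (A.comp s g) h k hstep
      rw [A.assoc t s g]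
      exact h3 }, fun S => rfl, ?_⟩
  intro a b f
  apply le_antisymm (α := Set (A.Hom a b))
  · intro f' hf'
    have h4 := hf' a b (A.id a) (A.id b) f (by
      intro s hs
      simp only [Set.mem_singleton_iff] at hs
      subst hs
      rw [A.comp_id, A.id_comp])
    rw [A.comp_id, A.id_comp] at h4
    exact h4
  · intro f' (hf' : f' ≤ f) a' b' g h k hk
    exact le_trans (A.comp_mono le_rfl (A.comp_mono hf' le_rfl)) (hk f rfl)
end

section
/- If j is a compatible nucleus on the power-set quantaloid P(A) of an order-enriched category A, then the pair (F_j, P(A)_j), where F_j is the identity on objects and sends f to ↓f, is a quantaloidal completion of A; in particular F_j is an order-embedding on hom-sets and every element S of P(A)_j(a,b) equals the supremum in P(A)_j of {↓f | f ∈ S}. -/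
universe u v

instance (A : OCat) (a b : A.Obj) : CompleteLattice ((PQ A).Hom a b) := (PQ A).lat a b

/-- The comparison 2-functor `F_j : A → P(A)_j`, identity on objects, `f ↦ ↓f`
(a fixed point of any compatible nucleus `j`). -/
def Fj {A : OCat} (j : QNucleus (PQ A)) (hj : j.Compatible) {a b : A.Obj}
    (f : A.Hom a b) : j.FHom a b :=
  ⟨Set.Iic f, by rw [← hj f]; exact j.idem _⟩

/-- If `j` is a compatible nucleus on the power-set quantaloid `P(A)` of an
order-enriched category `A`, then `(F_j, P(A)_j)` is a quantaloidal completion of `A`: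
`F_j` is a 2-functor, identity (hence bijective) on objects, an order-embedding on
hom-sets, and every `S ∈ P(A)_j(a,b)` is the supremum in `P(A)_j` of `{↓f | f ∈ S}`. -/
theorem compatible_nucleus_gives_completion (A : OCat) (j : QNucleus (PQ A))
    (hj : j.Compatible) :
    -- bijective (indeed the identity) on objects
    Function.Bijective (fun a : A.Obj => a) ∧
    -- a 2-functor: monotone on hom-sets, preserves identities and composition
    (∀ {a b : A.Obj} {f g : A.Hom a b}, f ≤ g → Fj j hj f ≤ Fj j hj g) ∧
    (∀ a : A.Obj, Fj j hj (A.id a) = j.qid a) ∧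
    (∀ {a b c : A.Obj} (g : A.Hom b c) (f : A.Hom a b),
        Fj j hj (A.comp g f) = j.qcomp (Fj j hj g) (Fj j hj f)) ∧
    -- an order-embedding on hom-sets
    (∀ {a b : A.Obj} (f g : A.Hom a b), Fj j hj f ≤ Fj j hj g ↔ f ≤ g) ∧
    -- every element of P(A)_j(a,b) is the sup in P(A)_j of the down-sets of its members
    (∀ {a b : A.Obj} (S : j.FHom a b),
        IsLUB ((fun f => Fj j hj f) '' (show Set (A.Hom a b) from S.1)) S) := by

  have hle : ∀ {a b : A.Obj} (S T : j.FHom a b), S ≤ T ↔ S.1 ≤ T.1 := by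
    intro a b S T; rfl
  refine ⟨Function.bijective_id, ?_, ?_, ?_, ?_, ?_⟩
  · intro a b f g hfg
    exact fun x hx => le_trans hx hfg
  · intro a
    apply Subtype.ext
    exact (hj (A.id a)).symm
  · intro a b c g f
    apply Subtype.ext
    show Set.Iic (A.comp g f) = j.map (Set.image2 A.comp (Set.Iic g) (Set.Iic f))
    apply le_antisymm
    · rw [← hj (A.comp g f)]
      apply j.mono
      intro x hx
      rcases hx with rfl
      exact ⟨g, le_refl g, f, le_refl f, rfl⟩
    · have h1 : Set.image2 A.comp (Set.Iic g) (Set.Iic f)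
          = (PQ A).comp (j.map ({g} : Set (A.Hom b c))) (j.map ({f} : Set (A.Hom a b))) := by
        rw [hj g, hj f]; rfl
      rw [h1]
      refine le_trans (j.mono (j.comp_le _ _)) ?_
      refine le_trans (le_of_eq (j.idem _)) ?_
      rw [← hj (A.comp g f)]
      apply j.mono
      rintro x ⟨y, rfl, z, rfl, rfl⟩
      rfl
  · intro a b f g
    constructor
    · intro h
      exact h (le_refl f)
    · intro h x hx
      exact le_trans hx h
  · intro a b S
    constructor
    · rintro T ⟨f, hf, rfl⟩
      show (Fj j hj f).1 ≤ S.1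
      have hsub : ({f} : Set (A.Hom a b)) ⊆ S.1 := Set.singleton_subset_iff.mpr hf
      exact le_trans (le_of_eq (hj f).symm) (le_trans (j.mono hsub) (le_of_eq S.2))
    · intro T hT
      show S.1 ≤ T.1
      intro f hf
      have h2 : Fj j hj f ≤ T := hT ⟨f, hf, rfl⟩
      exact h2 (le_refl f)
end

section
/- Let (F, Q) be a quantaloidal completion of an order-enriched category A. Then the map j_{(F,Q)}, acting as the identity on objects and sending S ∈ P(A)(a,b) to {f ∈ A(a,b) | F(f) ≤ ⋁_{g∈S} F(g)}, is a compatible quantaloidal nucleus on the power-set quantaloid P(A). -/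
universe u v

/-- `(F, Q)` is a quantaloidal completion of the order-enriched category `A`:
`F` is a 2-functor which is bijective on objects, an order-embedding on hom-sets,
and every morphism of `Q` is a supremum of `F`-images of morphisms of `A`. -/
structure IsQuantCompletion (A : OCat) (Q : Quantaloid) (Fo : A.Obj → Q.Obj)
    (Fm : ∀ a b : A.Obj, A.Hom a b → Q.Hom (Fo a) (Fo b)) : Prop where
  map_id : ∀ a : A.Obj, Fm a a (A.id a) = Q.id (Fo a)
  map_comp : ∀ {a b c : A.Obj} (g : A.Hom b c) (f : A.Hom a b),
    Fm a c (A.comp g f) = Q.comp (Fm b c g) (Fm a b f)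
  mono : ∀ {a b : A.Obj} {f g : A.Hom a b}, f ≤ g → Fm a b f ≤ Fm a b g
  obj_bijective : Function.Bijective Fo
  embed : ∀ {a b : A.Obj} {f g : A.Hom a b}, Fm a b f ≤ Fm a b g → f ≤ g
  dense : ∀ {a b : A.Obj} (p : Q.Hom (Fo a) (Fo b)),
    ∃ U : Set (A.Hom a b), p = sSup ((Fm a b) '' U)

/-- Composition in a quantaloid is monotone in both variables. -/
lemma Quantaloid.comp_mono (Q : Quantaloid) {a b c : Q.Obj}
    {g g' : Q.Hom b c} {f f' : Q.Hom a b} (hg : g ≤ g') (hf : f ≤ f') :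
    Q.comp g f ≤ Q.comp g' f' := by
  have h1 : Q.comp g f ≤ Q.comp g' f := by
    have := Q.sSup_comp {g, g'} f
    have hs : sSup ({g, g'} : Set (Q.Hom b c)) = g' := by
      rw [sSup_pair]; exact sup_eq_right.mpr hg
    rw [hs] at this
    rw [this]
    exact le_sSup ⟨g, by simp, rfl⟩
  have h2 : Q.comp g' f ≤ Q.comp g' f' := by
    have := Q.comp_sSup g' {f, f'}
    have hs : sSup ({f, f'} : Set (Q.Hom a b)) = f' := by
      rw [sSup_pair]; exact sup_eq_right.mpr hf
    rw [hs] at this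
    rw [this]
    exact le_sSup ⟨f, by simp, rfl⟩
  exact le_trans h1 h2

/-- Let `(F, Q)` be a quantaloidal completion of an order-enriched category `A`.  Then
the map `j_{(F,Q)}`, identity on objects and sending `S ∈ P(A)(a,b)` to
`{f ∈ A(a,b) | F(f) ≤ ⋁_{g∈S} F(g)}`, is a compatible quantaloidal nucleus on the
power-set quantaloid `P(A)`. -/

theorem completion_induces_compatible_nucleus (A : OCat) (Q : Quantaloid)
    (Fo : A.Obj → Q.Obj) (Fm : ∀ a b : A.Obj, A.Hom a b → Q.Hom (Fo a) (Fo b))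
    (hF : IsQuantCompletion A Q Fo Fm) :
    ∃ j : QNucleus (PQ A),
      (∀ {a b : A.Obj} (S : Set (A.Hom a b)),
          j.map S = {f : A.Hom a b | Fm a b f ≤ sSup ((Fm a b) '' S)}) ∧
      j.Compatible := by
  classical
  refine ⟨{ map := fun {a b} S => {f : A.Hom a b | Fm a b f ≤ sSup ((Fm a b) '' S)}
            mono := ?_
            le_map := ?_
            idem := ?_
            comp_le := ?_ }, fun {a b} S => rfl, ?_⟩
  · intro a b S S' h f hf
    exact le_trans hf (sSup_le_sSup (Set.image_mono h))
  · intro a b S f hf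
    exact le_sSup ⟨f, hf, rfl⟩
  · intro a b S
    apply le_antisymm
    · intro f hf
      refine le_trans hf (sSup_le ?_)
      rintro _ ⟨g, hg, rfl⟩
      exact hg
    · intro f hf
      exact le_trans hf (sSup_le_sSup (Set.image_mono (fun g hg => le_sSup ⟨g, hg, rfl⟩)))
  · intro a b c T S
    rintro x ⟨g, hg, f, hf, rfl⟩
    show Fm a c (A.comp g f) ≤ _
    rw [show Fm a c (A.comp g f) = Q.comp (Fm b c g) (Fm a b f) from hF.map_comp g f]
    have h1 : Q.comp (Fm b c g) (Fm a b f)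
        ≤ Q.comp (sSup ((Fm b c) '' T)) (sSup ((Fm a b) '' S)) :=
      Q.comp_mono hg hf
    refine le_trans h1 ?_
    rw [Q.sSup_comp]
    apply sSup_le
    rintro _ ⟨_, ⟨g', hg', rfl⟩, rfl⟩
    show Q.comp (Fm b c g') (sSup ((Fm a b) '' S)) ≤ _
    rw [Q.comp_sSup]
    apply sSup_le
    rintro _ ⟨_, ⟨f', hf', rfl⟩, rfl⟩
    show Q.comp (Fm b c g') (Fm a b f') ≤ _
    rw [show Q.comp (Fm b c g') (Fm a b f') = Fm a c (A.comp g' f') from (hF.map_comp g' f').symm]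
    exact le_sSup ⟨A.comp g' f', ⟨g', hg', f', hf', rfl⟩, rfl⟩
  · intro a b f
    show {g : A.Hom a b | Fm a b g ≤ sSup ((Fm a b) '' {f})} = Set.Iic f
    ext g
    simp only [Set.image_singleton, sSup_singleton, Set.mem_Iic, Set.mem_setOf_eq]
    exact ⟨fun h => hF.embed h, fun h => hF.mono h⟩
end

section
/- Let (F, Q) be a quantaloidal completion of an order-enriched category A, and let j = j_{(F,Q)} be the nucleus with j(S) = {f | F(f) ≤ ⋁_{g∈S} F(g)}. Then Q is isomorphic as a quantaloid to the quotient P(A)_j, via the functor G defined on objects by G = F⁻¹ and on morphisms by G(p) = {f ∈ A(F⁻¹c, F⁻¹d) | F(f) ≤ p}. -/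
universe u v

instance PQ.instCompleteLattice (A : OCat) (a b : A.Obj) : CompleteLattice ((PQ A).Hom a b) :=
  Quantaloid.lat (PQ A) a b

/-- Let `(F, Q)` be a quantaloidal completion of an order-enriched category `A`, and
`j = j_{(F,Q)}` the nucleus `j(S) = {f | F(f) ≤ ⋁_{g∈S} F(g)}`.  Then `Q` is
quantaloidally isomorphic to the quotient `P(A)_j`, via `G` with
`G(p) = {f | F(f) ≤ p}` on hom-sets (and `G = F⁻¹` on objects). -/
theorem completion_isomorphic_to_quotient (A : OCat) (Q : Quantaloid)
    (Fo : A.Obj → Q.Obj) (Fm : ∀ a b : A.Obj, A.Hom a b → Q.Hom (Fo a) (Fo b))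
    (hF : IsQuantCompletion A Q Fo Fm) (j : QNucleus (PQ A))
    (hj : ∀ {a b : A.Obj} (S : Set (A.Hom a b)),
        j.map S = {f : A.Hom a b | Fm a b f ≤ sSup ((Fm a b) '' S)}) :
    ∃ e : ∀ a b : A.Obj, Q.Hom (Fo a) (Fo b) ≃o j.FHom a b,
      -- `e` is given by `p ↦ {f | F(f) ≤ p}`
      (∀ (a b : A.Obj) (p : Q.Hom (Fo a) (Fo b)),
          (show Set (A.Hom a b) from (e a b p).1) = {f : A.Hom a b | Fm a b f ≤ p}) ∧
      -- `e` preserves composition and identities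
      (∀ {a b c : A.Obj} (g : Q.Hom (Fo b) (Fo c)) (f : Q.Hom (Fo a) (Fo b)),
          e a c (Q.comp g f) = j.qcomp (e b c g) (e a b f)) ∧
      (∀ a : A.Obj, e a a (Q.id (Fo a)) = j.qid a) := by
    classical
  -- monotonicity of Q.comp
  have cml : ∀ {a b c : Q.Obj} (g : Q.Hom b c) {f f' : Q.Hom a b},
      f ≤ f' → Q.comp g f ≤ Q.comp g f' := by
    intro a b c g f f' h
    have hs : sSup ({f, f'} : Set (Q.Hom a b)) = f' := by
      rw [sSup_pair, sup_eq_right.mpr h]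
    have := Q.comp_sSup g ({f, f'} : Set (Q.Hom a b))
    rw [hs] at this
    rw [this]
    exact le_sSup ⟨f, by simp, rfl⟩
  have cmr : ∀ {a b c : Q.Obj} {g g' : Q.Hom b c} (f : Q.Hom a b),
      g ≤ g' → Q.comp g f ≤ Q.comp g' f := by
    intro a b c g g' f h
    have hs : sSup ({g, g'} : Set (Q.Hom b c)) = g' := by
      rw [sSup_pair, sup_eq_right.mpr h]
    have := Q.sSup_comp ({g, g'} : Set (Q.Hom b c)) f
    rw [hs] at this
    rw [this]
    exact le_sSup ⟨g, by simp, rfl⟩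
  -- key: sSup (Fm '' {f | Fm f ≤ p}) = p
  have key : ∀ {a b : A.Obj} (p : Q.Hom (Fo a) (Fo b)),
      sSup ((Fm a b) '' {f | Fm a b f ≤ p}) = p := by
    intro a b p
    apply le_antisymm
    · apply sSup_le
      rintro _ ⟨f, hf, rfl⟩
      exact hf
    · obtain ⟨U, hU⟩ := hF.dense p
      rw [hU]
      apply sSup_le
      rintro _ ⟨u, hu, rfl⟩
      exact le_sSup ⟨u, le_sSup ⟨u, hu, rfl⟩, rfl⟩
  have fix : ∀ {a b : A.Obj} (p : Q.Hom (Fo a) (Fo b)),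
      j.map {f | Fm a b f ≤ p} = {f | Fm a b f ≤ p} := by
    intro a b p
    rw [hj, key]
  refine ⟨fun a b =>
    { toFun := fun p => ⟨{f | Fm a b f ≤ p}, fix p⟩
      invFun := fun S => sSup ((Fm a b) '' S.1)
      left_inv := fun p => key p
      right_inv := fun S => by
        apply Subtype.ext
        show {f | Fm a b f ≤ sSup ((Fm a b) '' S.1)} = S.1
        exact (hj S.1).symm.trans S.2
      map_rel_iff' := by
        intro p q
        constructor
        · intro h
          calc p = sSup ((Fm a b) '' {f | Fm a b f ≤ p}) := (key p).symm
            _ ≤ sSup ((Fm a b) '' {f | Fm a b f ≤ q}) := by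
                apply sSup_le_sSup
                exact Set.image_mono h
            _ = q := key q
        · intro h f hf
          exact le_trans hf h }, ?_, ?_, ?_⟩
  · intro a b p; rfl
  · intro a b c g f
    apply Subtype.ext
    show {h | Fm a c h ≤ Q.comp g f} =
      j.map (Set.image2 A.comp {t | Fm b c t ≤ g} {s | Fm a b s ≤ f})
    rw [hj]
    have hsup : sSup ((Fm a c) '' Set.image2 A.comp {t | Fm b c t ≤ g} {s | Fm a b s ≤ f})
        = Q.comp g f := by
      apply le_antisymm
      · apply sSup_le
        rintro _ ⟨_, ⟨t, ht, s, hs, rfl⟩, rfl⟩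
        rw [hF.map_comp]
        exact le_trans (cml _ hs) (cmr _ ht)
      · obtain ⟨U, hU⟩ := hF.dense g
        obtain ⟨V, hV⟩ := hF.dense f
        have hgU : Q.comp g f = Q.comp (sSup ((Fm b c) '' U)) f := by rw [← hU]
        rw [hgU, Q.sSup_comp]
        apply sSup_le
        rintro _ ⟨_, ⟨t, htU, rfl⟩, rfl⟩
        show Q.comp (Fm b c t) f ≤ _
        have hfV : Q.comp (Fm b c t) f = Q.comp (Fm b c t) (sSup ((Fm a b) '' V)) := by
          rw [← hV]
        rw [hfV, Q.comp_sSup]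
        apply sSup_le
        rintro _ ⟨_, ⟨s, hsV, rfl⟩, rfl⟩
        show Q.comp (Fm b c t) (Fm a b s) ≤ _
        rw [← hF.map_comp]
        refine le_sSup ⟨A.comp t s, ⟨t, ?_, s, ?_, rfl⟩, rfl⟩
        · show Fm b c t ≤ g
          rw [hU]; exact le_sSup ⟨t, htU, rfl⟩
        · show Fm a b s ≤ f
          rw [hV]; exact le_sSup ⟨s, hsV, rfl⟩
    rw [hsup]
  · intro a
    apply Subtype.ext
    show {f | Fm a a f ≤ Q.id (Fo a)} = j.map (show (PQ A).Hom a a from ({A.id a} : Set (A.Hom a a)))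
    rw [hj]
    have : sSup ((Fm a a) '' ({A.id a} : Set (A.Hom a a))) = Q.id (Fo a) := by
      rw [Set.image_singleton, sSup_singleton, hF.map_id]
    rw [this]
end

section
/- In the category of order-enriched categories and lax semifunctors, every retract of a quantaloid is a quantaloid. More precisely, if there are lax semifunctors I: S → Q and F: Q → S with F ∘ I = id_S and Q is a quantaloid, then each hom-poset S(X,Y) is a complete lattice with ⋁A = F(⋁ I(A)), and composition in S preserves arbitrary suprema in both variables. -/
universe u v
/-- A lax semifunctor between order-enriched categories: an object map together with
monotone hom-maps satisfying `F(g) ∘ F(f) ≤ F(g ∘ f)` (no condition on identities). -/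
structure LaxSemifunctor (C D : OCat) where
  obj : C.Obj → D.Obj
  map : ∀ {a b : C.Obj}, C.Hom a b → D.Hom (obj a) (obj b)
  mono : ∀ {a b : C.Obj} {f g : C.Hom a b}, f ≤ g → map f ≤ map g
  comp_le : ∀ {a b c : C.Obj} (g : C.Hom b c) (f : C.Hom a b),
    D.comp (map g) (map f) ≤ map (C.comp g f)

/-- Composition of lax semifunctors. -/
def LaxSemifunctor.comp {C D E : OCat} (G : LaxSemifunctor D E) (F : LaxSemifunctor C D) :
    LaxSemifunctor C E where
  obj := fun a => G.obj (F.obj a)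
  map := fun f => G.map (F.map f)
  mono := fun h => G.mono (F.mono h)
  comp_le := fun g f => le_trans (G.comp_le (F.map g) (F.map f)) (G.mono (F.comp_le g f))

/-- The identity lax semifunctor. -/
def LaxSemifunctor.id (C : OCat) : LaxSemifunctor C C where
  obj := fun a => a
  map := fun f => f
  mono := fun h => h
  comp_le := fun _ _ => le_refl _

/-- An order-enriched category is a quantaloid when each hom-poset is a complete
lattice (every subset has a least upper bound) and composition preserves arbitrary
suprema in both variables. -/
def OCat.IsQuantaloid (C : OCat) : Prop :=
  (∀ (a b : C.Obj) (S : Set (C.Hom a b)), ∃ u, IsLUB S u) ∧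
  (∀ {a b c : C.Obj} (g : C.Hom b c) (S : Set (C.Hom a b)) (u : C.Hom a b),
      IsLUB S u → IsLUB ((fun f => C.comp g f) '' S) (C.comp g u)) ∧
  (∀ {a b c : C.Obj} (S : Set (C.Hom b c)) (f : C.Hom a b) (u : C.Hom b c),
      IsLUB S u → IsLUB ((fun g => C.comp g f) '' S) (C.comp u f))

/-- A nonempty composable chain of morphisms (used for finite composites
`f₁ ∘ f₂ ∘ ⋯ ∘ fₙ`). -/
inductive OPath (C : OCat.{u, v}) : C.Obj → C.Obj → Type (max u v) where
  | single : ∀ {a b : C.Obj}, C.Hom a b → OPath C a b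
  | cons : ∀ {a b c : C.Obj}, C.Hom b c → OPath C a b → OPath C a c

/-- The composite `f₁ ∘ f₂ ∘ ⋯ ∘ fₙ` of a composable chain. -/
def OPath.comp {C : OCat} : ∀ {a b : C.Obj}, OPath C a b → C.Hom a b
  | _, _, .single f => f
  | _, _, .cons g p => C.comp g p.comp

/-- Applying a lax semifunctor to each morphism of a composable chain. -/
def OPath.map {C D : OCat} (H : LaxSemifunctor C D) :
    ∀ {a b : C.Obj}, OPath C a b → OPath D (H.obj a) (H.obj b)
  | _, _, .single f => .single (H.map f)
  | _, _, .cons g p => .cons (H.map g) (p.map H)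

/-- The class `E` of lax semifunctors: bijective on objects, and reflecting the order on
finite composites: `H(f₁) ∘ ⋯ ∘ H(fₙ) ≤ H(f)` implies `f₁ ∘ ⋯ ∘ fₙ ≤ f`. -/
def InE {S T : OCat} (H : LaxSemifunctor S T) : Prop :=
  Function.Bijective H.obj ∧
  ∀ {a b : S.Obj} (p : OPath S a b) (f : S.Hom a b),
    (p.map H).comp ≤ H.map f → p.comp ≤ f

lemma OCat.cast_le_cast {C : OCat} {a a' b b' : C.Obj} (ha : a = a') (hb : b = b')
    {f g : C.Hom a b} (h : f ≤ g) :
    cast (by rw [ha, hb]) f ≤ (cast (by rw [ha, hb]) g : C.Hom a' b') := by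
  subst ha; subst hb; exact h

lemma OCat.cast_comp {C : OCat} {a a' b b' c c' : C.Obj}
    (ha : a = a') (hb : b = b') (hc : c = c') (g : C.Hom b c) (f : C.Hom a b) :
    (cast (by rw [ha, hc]) (C.comp g f) : C.Hom a' c') =
      C.comp (cast (by rw [hb, hc]) g : C.Hom b' c') (cast (by rw [ha, hb]) f : C.Hom a' b') := by
  subst ha; subst hb; subst hc; rfl

/-- In the category of order-enriched categories and lax semifunctors, every retract of
a quantaloid is a quantaloid.  More precisely, if `I : S → Q` and `F : Q → S` are lax
semifunctors with `F ∘ I = id_S` and `Q` is a quantaloid, then `S` is a quantaloid: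
each hom-poset `S(X,Y)` is a complete lattice, with `⋁A = F(⋁ I(A))`, and composition
in `S` preserves arbitrary suprema in both variables. -/
theorem retract_of_quantaloid_is_quantaloid (S Q : OCat) (hQ : Q.IsQuantaloid)
    (I : LaxSemifunctor S Q) (F : LaxSemifunctor Q S)
    (hobj : ∀ X : S.Obj, F.obj (I.obj X) = X)
    (hmap : ∀ {a b : S.Obj} (f : S.Hom a b), HEq (F.map (I.map f)) f) :
    S.IsQuantaloid ∧
    ∀ (X Y : S.Obj) (A : Set (S.Hom X Y)) (u : Q.Hom (I.obj X) (I.obj Y)),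
      IsLUB ((fun f => I.map f) '' A) u →
      IsLUB A (cast (by rw [hobj X, hobj Y]) (F.map u)) := by
  classical
  -- the "retraction" map on homs, transported to the right type
  let G : ∀ {X Y : S.Obj}, Q.Hom (I.obj X) (I.obj Y) → S.Hom X Y :=
    fun {X Y} f => cast (by rw [hobj X, hobj Y]) (F.map f)
  have hGI : ∀ {X Y : S.Obj} (f : S.Hom X Y), G (I.map f) = f := by
    intro X Y f
    exact cast_eq_iff_heq.mpr (hmap f)
  have hGmono : ∀ {X Y : S.Obj} {f g : Q.Hom (I.obj X) (I.obj Y)}, f ≤ g → G f ≤ G g := by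
    intro X Y f g h
    exact OCat.cast_le_cast (hobj X) (hobj Y) (F.mono h)
  have hGlax : ∀ {X Y Z : S.Obj} (g : Q.Hom (I.obj Y) (I.obj Z)) (f : Q.Hom (I.obj X) (I.obj Y)),
      S.comp (G g) (G f) ≤ G (Q.comp g f) := by
    intro X Y Z g f
    have := OCat.cast_le_cast (C := S) (hobj X) (hobj Z) (F.comp_le g f)
    calc S.comp (G g) (G f)
        = cast (by rw [hobj X, hobj Z]) (S.comp (F.map g) (F.map f)) :=
          (OCat.cast_comp (hobj X) (hobj Y) (hobj Z) (F.map g) (F.map f)).symm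
      _ ≤ G (Q.comp g f) := this
  -- the key LUB statement
  have key : ∀ (X Y : S.Obj) (A : Set (S.Hom X Y)) (u : Q.Hom (I.obj X) (I.obj Y)),
      IsLUB ((fun f => I.map f) '' A) u → IsLUB A (G u) := by
    intro X Y A u hu
    constructor
    · intro f hf
      have h1 : I.map f ≤ u := hu.1 ⟨f, hf, rfl⟩
      calc f = G (I.map f) := (hGI f).symm
        _ ≤ G u := hGmono h1
    · intro v hv
      have h1 : u ≤ I.map v := by
        apply hu.2
        rintro q ⟨f, hf, rfl⟩
        exact I.mono (hv hf)
      calc G u ≤ G (I.map v) := hGmono h1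
        _ = v := hGI v
  refine ⟨⟨?_, ?_, ?_⟩, key⟩
  · intro a b A
    obtain ⟨u, hu⟩ := hQ.1 _ _ ((fun f => I.map f) '' A)
    exact ⟨G u, key a b A u hu⟩
  · intro a b c g A u hu
    obtain ⟨w, hw⟩ := hQ.1 _ _ ((fun f => I.map f) '' A)
    have huw : u = G w := hu.unique (key a b A w hw)
    constructor
    · rintro q ⟨f, hf, rfl⟩
      exact S.comp_mono le_rfl (hu.1 hf)
    · intro v hv
      have hw2 := hQ.2.1 (I.map g) _ w hw
      have h1 : Q.comp (I.map g) w ≤ I.map v := by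
        apply hw2.2
        rintro q ⟨q', ⟨f, hf, rfl⟩, rfl⟩
        calc Q.comp (I.map g) (I.map f) ≤ I.map (S.comp g f) := I.comp_le g f
          _ ≤ I.map v := I.mono (hv ⟨f, hf, rfl⟩)
      calc S.comp g u = S.comp (G (I.map g)) (G w) := by rw [huw, hGI]
        _ ≤ G (Q.comp (I.map g) w) := hGlax _ _
        _ ≤ G (I.map v) := hGmono h1
        _ = v := hGI v
  · intro a b c A f u hu
    obtain ⟨w, hw⟩ := hQ.1 _ _ ((fun g => I.map g) '' A)
    have huw : u = G w := hu.unique (key b c A w hw)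
    constructor
    · rintro q ⟨g, hg, rfl⟩
      exact S.comp_mono (hu.1 hg) le_rfl
    · intro v hv
      have hw2 := hQ.2.2 _ (I.map f) w hw
      have h1 : Q.comp w (I.map f) ≤ I.map v := by
        apply hw2.2
        rintro q ⟨q', ⟨g, hg, rfl⟩, rfl⟩
        calc Q.comp (I.map g) (I.map f) ≤ I.map (S.comp g f) := I.comp_le g f
          _ ≤ I.map v := I.mono (hv ⟨g, hg, rfl⟩)
      calc S.comp u f = S.comp (G w) (G (I.map f)) := by rw [huw, hGI]
        _ ≤ G (Q.comp w (I.map f)) := hGlax _ _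
        _ ≤ G (I.map v) := hGmono h1
        _ = v := hGI v
end

section
/- Every quantaloid Q is E-injective in the category of order-enriched categories and lax semifunctors, where E is the class of lax semifunctors H: S → T that are bijective on objects and satisfy: H(f_1)∘⋯∘H(f_n) ≤ H(f) implies f_1∘⋯∘f_n ≤ f for composable f_1,…,f_n with f_1∘⋯∘f_n, f ∈ S(a,b). That is, for every H ∈ E and every lax semifunctor F: S → Q there exists a lax semifunctor G: T → Q with G ∘ H = F. -/
universe u v
/-- Transport of a morphism along equalities of objects. -/
def hcast {C : OCat} {a b a' b' : C.Obj} (ha : a = a') (hb : b = b')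
    (f : C.Hom a b) : C.Hom a' b' := hb ▸ ha ▸ f

@[simp] theorem hcast_rfl {C : OCat} {a b : C.Obj} (f : C.Hom a b) :
    hcast rfl rfl f = f := rfl

theorem hcast_heq {C : OCat} {a b a' b' : C.Obj} (ha : a = a') (hb : b = b')
    (f : C.Hom a b) : HEq (hcast ha hb f) f := by subst ha; subst hb; rfl

theorem hcast_self {C : OCat} {a b : C.Obj} (ha : a = a) (hb : b = b)
    (f : C.Hom a b) : hcast ha hb f = f := by
  rw [Subsingleton.elim ha rfl, Subsingleton.elim hb rfl]; rfl

theorem hcast_hcast {C : OCat} {a b a' b' a'' b'' : C.Obj}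
    (ha : a = a') (hb : b = b') (ha' : a' = a'') (hb' : b' = b'') (f : C.Hom a b) :
    hcast ha' hb' (hcast ha hb f) = hcast (ha.trans ha') (hb.trans hb') f := by
  subst ha; subst hb; subst ha'; subst hb'; rfl

theorem hcast_le_iff {C : OCat} {a b a' b' : C.Obj} (ha : a = a') (hb : b = b')
    (f g : C.Hom a b) : hcast ha hb f ≤ hcast ha hb g ↔ f ≤ g := by
  subst ha; subst hb; rfl

theorem hcast_comp {C : OCat} {a b c a' b' c' : C.Obj}
    (ha : a = a') (hb : b = b') (hc : c = c')
    (g : C.Hom b c) (f : C.Hom a b) :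
    hcast ha hc (C.comp g f) = C.comp (hcast hb hc g) (hcast ha hb f) := by
  subst ha; subst hb; subst hc; rfl

theorem map_hcast {C D : OCat} (F : LaxSemifunctor C D) {a b a' b' : C.Obj}
    (ha : a = a') (hb : b = b') (f : C.Hom a b) :
    F.map (hcast ha hb f) = hcast (congrArg F.obj ha) (congrArg F.obj hb) (F.map f) := by
  subst ha; subst hb; rfl

theorem LaxSemifunctor.ext' {C D : OCat} {F G : LaxSemifunctor C D}
    (hobj : F.obj = G.obj)
    (hmap : ∀ (a b : C.Obj) (f : C.Hom a b), HEq (F.map f) (G.map f)) : F = G := by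
  obtain ⟨o, m, mo, cl⟩ := F
  obtain ⟨o', m', mo', cl'⟩ := G
  dsimp at hobj
  subst hobj
  have hm : @m = @m' := by
    funext a b f
    exact eq_of_heq (hmap a b f)
  subst hm
  rfl

/-- Concatenation of composable chains. -/
def OPath.append {C : OCat} : ∀ {a b c : C.Obj}, OPath C b c → OPath C a b → OPath C a c
  | _, _, _, .single g, q => .cons g q
  | _, _, _, .cons g p, q => .cons g (p.append q)

theorem OPath.append_comp {C : OCat} {a b c : C.Obj} (p : OPath C b c) (q : OPath C a b) :
    (p.append q).comp = C.comp p.comp q.comp := by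
  induction p with
  | single g => simp [OPath.append, OPath.comp]
  | cons g p ih =>
      simp only [OPath.append, OPath.comp, ih]
      exact (C.assoc g p.comp q.comp).symm

theorem OPath.map_append {C D : OCat} (H : LaxSemifunctor C D) {a b c : C.Obj}
    (p : OPath C b c) (q : OPath C a b) :
    (p.append q).map H = (p.map H).append (q.map H) := by
  induction p with
  | single g => simp only [OPath.append, OPath.map]
  | cons g p ih => simp only [OPath.append, OPath.map, ih]

theorem OPath.map_comp_le {C D : OCat} (F : LaxSemifunctor C D) {a b : C.Obj}
    (p : OPath C a b) : (p.map F).comp ≤ F.map p.comp := by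
  induction p with
  | single f =>
      simp only [OPath.map, OPath.comp]
      exact le_refl (F.map f)
  | cons g p ih =>
      simp only [OPath.map, OPath.comp]
      exact le_trans (D.comp_mono (le_refl (F.map g)) ih) (F.comp_le _ _)

/-- Every quantaloid `Q` is `E`-injective in the category of order-enriched categories
and lax semifunctors, where `E` is the class of lax semifunctors that are bijective on
objects and reflect the order on finite composites: for every `H : S → T` in `E` and
every lax semifunctor `F : S → Q` there is a lax semifunctor `G : T → Q` with
`G ∘ H = F`. -/
theorem quantaloid_is_E_injective (Q : OCat) (hQ : Q.IsQuantaloid) (S T : OCat)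
    (H : LaxSemifunctor S T) (hH : InE H) (F : LaxSemifunctor S Q) :
    ∃ G : LaxSemifunctor T Q, G.comp H = F := by
  classical
  obtain ⟨hbij, hrefl⟩ := hH
  obtain ⟨hsup, hcompl, hcompr⟩ := hQ
  let eqv := Equiv.ofBijective H.obj hbij
  let e : T.Obj → S.Obj := eqv.symm
  have hx : ∀ x, H.obj (e x) = x := fun x => eqv.apply_symm_apply x
  have hea : ∀ a, e (H.obj a) = a := fun a => eqv.symm_apply_apply a
  let D : ∀ {x y : T.Obj}, T.Hom x y → Set (Q.Hom (F.obj (e x)) (F.obj (e y))) :=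
    fun {x y} g => { u | ∃ p : OPath S (e x) (e y),
      hcast (hx x) (hx y) (p.map H).comp ≤ g ∧ u = (p.map F).comp }
  let Gm : ∀ {x y : T.Obj}, T.Hom x y → Q.Hom (F.obj (e x)) (F.obj (e y)) :=
    fun {x y} g => (hsup _ _ (D g)).choose
  have hlub : ∀ {x y : T.Obj} (g : T.Hom x y), IsLUB (D g) (Gm g) :=
    fun g => (hsup _ _ (D g)).choose_spec
  have hmono : ∀ {x y : T.Obj} {g g' : T.Hom x y}, g ≤ g' → Gm g ≤ Gm g' := by
    intro x y g g' hg
    refine (hlub g).2 ?_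
    intro u hu
    obtain ⟨p, hp, rfl⟩ := hu
    exact (hlub g').1 ⟨p, le_trans hp hg, rfl⟩
  have hcomp : ∀ {x y z : T.Obj} (g : T.Hom y z) (f : T.Hom x y),
      Q.comp (Gm g) (Gm f) ≤ Gm (T.comp g f) := by
    intro x y z g f
    have h1 : IsLUB ((fun v => Q.comp v (Gm f)) '' D g) (Q.comp (Gm g) (Gm f)) :=
      hcompr (D g) (Gm f) (Gm g) (hlub g)
    refine h1.2 ?_
    rintro _ ⟨v, ⟨p, hp, rfl⟩, rfl⟩
    have h2 : IsLUB ((fun w => Q.comp (p.map F).comp w) '' D f)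
        (Q.comp (p.map F).comp (Gm f)) := hcompl (p.map F).comp (D f) (Gm f) (hlub f)
    refine h2.2 ?_
    rintro _ ⟨w, ⟨q, hq, rfl⟩, rfl⟩
    refine (hlub (T.comp g f)).1 ⟨p.append q, ?_, ?_⟩
    · rw [OPath.map_append, OPath.append_comp,
        hcast_comp (hx x) (hx y) (hx z) (p.map H).comp (q.map H).comp]
      exact T.comp_mono hp hq
    · rw [OPath.map_append, OPath.append_comp]
  have key : ∀ (x y : T.Obj) (f : S.Hom (e x) (e y)),
      Gm (hcast (hx x) (hx y) (H.map f)) = F.map f := by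
    intro x y f
    refine (hlub (hcast (hx x) (hx y) (H.map f))).unique ?_
    constructor
    · rintro u ⟨p, hp, rfl⟩
      have h1 : (p.map H).comp ≤ H.map f := (hcast_le_iff (hx x) (hx y) _ _).mp hp
      exact le_trans (OPath.map_comp_le F p) (F.mono (hrefl p f h1))
    · intro u hu
      refine hu ⟨OPath.single f, ?_, ?_⟩
      · simp only [OPath.map, OPath.comp]
        exact le_refl _
      · simp only [OPath.map, OPath.comp]
  refine ⟨⟨fun x => F.obj (e x), fun {x y} g => Gm g, hmono, hcomp⟩, ?_⟩
  apply LaxSemifunctor.ext'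
  · funext a
    show F.obj (e (H.obj a)) = F.obj a
    rw [hea a]
  · intro a b f
    show HEq (Gm (H.map f)) (F.map f)
    have h1 := key (H.obj a) (H.obj b) (hcast (hea a).symm (hea b).symm f)
    have h2 : hcast (hx (H.obj a)) (hx (H.obj b))
        (H.map (hcast (hea a).symm (hea b).symm f)) = H.map f := by
      rw [map_hcast H, hcast_hcast, hcast_self]
    rw [h2] at h1
    rw [h1, map_hcast F]
    exact hcast_heq _ _ _
end

section
/- For an order-enriched category A, the embedding η: A → D(A) into the down-set quantaloid, identity on objects and sending f to ↓f, is a lax semifunctor belonging to the class E: it is bijective on objects and satisfies that ↓f_1 ∘ ⋯ ∘ ↓f_n ⊆ ↓f implies f_1 ∘ ⋯ ∘ f_n ≤ f. -/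
universe u v
/-- The composite `↓f₁ ∘ ↓f₂ ∘ ⋯ ∘ ↓fₙ` in the down-set quantaloid `D(A)` of a
composable chain of morphisms of `A` (composition in `D(A)` being
`T ∘ S = ↓{g∘f | g ∈ T, f ∈ S}`). -/
def dcompOPath (A : OCat) : ∀ {a b : A.Obj}, OPath A a b → LowerSet (A.Hom a b)
  | _, _, .single f => LowerSet.Iic f
  | _, _, .cons g p =>
      lowerClosure (Set.image2 A.comp (Set.Iic g) ((dcompOPath A p : LowerSet _) : Set _))

lemma mem_dcompOPath (A : OCat) : ∀ {a b : A.Obj} (p : OPath A a b),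
    p.comp ∈ (dcompOPath A p : LowerSet _) := by
  intro a b p
  induction p with
  | single f =>
      simp only [OPath.comp, dcompOPath]
      exact Set.mem_Iic.2 (le_refl f)
  | cons g p ih =>
      simp only [OPath.comp, dcompOPath]
      exact subset_lowerClosure (Set.mem_image2_of_mem (Set.mem_Iic.2 le_rfl) ih)

/-- For an order-enriched category `A`, the embedding `η : A → D(A)` into the down-set
quantaloid — identity on objects, `f ↦ ↓f` — is a lax semifunctor belonging to the
class `E`: it is monotone and lax on hom-sets, bijective (indeed the identity) on
objects, and `↓f₁ ∘ ⋯ ∘ ↓fₙ ⊆ ↓f` implies `f₁ ∘ ⋯ ∘ fₙ ≤ f`. -/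
theorem eta_is_lax_semifunctor_in_E (A : OCat) :
    -- η is monotone on hom-sets
    (∀ {a b : A.Obj} {f g : A.Hom a b}, f ≤ g →
        (LowerSet.Iic f : LowerSet (A.Hom a b)) ≤ LowerSet.Iic g) ∧
    -- η is a lax semifunctor: η(g) ∘ η(f) ≤ η(g ∘ f) in D(A)
    (∀ {a b c : A.Obj} (g : A.Hom b c) (f : A.Hom a b),
        lowerClosure (Set.image2 A.comp (Set.Iic g) (Set.Iic f))
          ≤ LowerSet.Iic (A.comp g f)) ∧
    -- η is bijective (the identity) on objects
    Function.Bijective (fun a : A.Obj => a) ∧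
    -- η reflects the order on finite composites
    (∀ {a b : A.Obj} (p : OPath A a b) (f : A.Hom a b),
        dcompOPath A p ≤ LowerSet.Iic f → p.comp ≤ f) := by
  refine ⟨fun h x hx => le_trans hx h, ?_, Function.bijective_id, ?_⟩
  · intro a b c g f x hx
    rw [SetLike.mem_coe, mem_lowerClosure] at hx
    obtain ⟨y, ⟨g', hg', f', hf', rfl⟩, hxy⟩ := hx
    exact le_trans hxy (A.comp_mono hg' hf')
  · intro a b p f hp
    exact hp (mem_dcompOPath A p)
end
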